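/- Right symmetrized bitableaux and Young symmetrizers, general case: let S and T be multilinear tableaux of the same shape λ ⊢ h, let I: {1,…,h} → {1,…,n} and J: {1,…,h} → {1,…,d} be arbitrary maps, and let U = I∘S and V = J∘T be the tableaux of shape λ obtained by applying I and J entrywise to S and T. Then in ℂ[M_{n,d}] one has (U|⎕V) = (−1)^(h choose 2) · Σ_{σ∈R(S), τ∈C(T)} sgn(σ) · Π_{k=1}^h x_{I((σ θ_{ST} τ)(k)), J(k)}. -/

import Mathlib

open MvPolynomial

noncomputable section

def e2 : List ℕ → ℕ
  | [] => 0
  | a :: l => a * l.sum + e2 l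

def IsShape (h : ℕ) (lam : List ℕ) : Prop :=
  lam.Pairwise (· ≥ ·) ∧ (∀ a ∈ lam, 0 < a) ∧ lam.sum = h

def biprod (n d : ℕ) (ω : List (Fin n)) (ϖ : List (Fin d)) : MvPolynomial (Fin n × Fin d) ℂ :=
  if hl : ω.length = ϖ.length then
    (-1 : MvPolynomial (Fin n × Fin d) ℂ) ^ (ω.length.choose 2) *
      (Matrix.of fun r s : Fin ω.length =>
        (X (ω.get r, ϖ.get (Fin.cast hl s)) : MvPolynomial (Fin n × Fin d) ℂ)).det
  else 0

def rowWord (n : ℕ) (lam : List ℕ) (T : ℕ → ℕ → Fin n) (r : ℕ) : List (Fin n) :=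
  (List.range (lam.getD r 0)).map (T r)

def bitab (n d : ℕ) (lam : List ℕ) (S : ℕ → ℕ → Fin n) (T : ℕ → ℕ → Fin d) :
    MvPolynomial (Fin n × Fin d) ℂ :=
  (-1 : MvPolynomial (Fin n × Fin d) ℂ) ^ e2 lam *
    ∏ r ∈ Finset.range lam.length, biprod n d (rowWord n lam S r) (rowWord d lam T r)

def IsStandard (n : ℕ) (lam : List ℕ) (T : ℕ → ℕ → Fin n) : Prop :=
  (∀ r c, c + 1 < lam.getD r 0 → T r c < T r (c + 1)) ∧
  (∀ r c, c < lam.getD (r + 1) 0 → T r c ≤ T (r + 1) c)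

/-- the length of column `c` of the shape `lam`: the number of rows containing
a cell in column `c` -/
def colLen (lam : List ℕ) (c : ℕ) : ℕ := lam.countP (fun a => decide (c < a))

/-- `T̄`: the tableau obtained from `T` by applying, within each column `c` of the
shape `lam`, the permutation `π c` of the entries of that column -/
def applyColPerm (d : ℕ) (lam : List ℕ) (T : ℕ → ℕ → Fin d)
    (π : ∀ c : Fin (lam.headD 0), Equiv.Perm (Fin (colLen lam c))) :
    ℕ → ℕ → Fin d := fun r c =>
  if h : c < lam.headD 0 ∧ r < colLen lam c then
    T ((π ⟨c, h.1⟩) ⟨r, h.2⟩ : ℕ) c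
  else T r c

/-- the right symmetrized bitableau `(S|⎕T)`: the sum of `(S|T̄)` over all tuples
of column permutations (with multiplicity) -/
def symmBitab (n d : ℕ) (lam : List ℕ) (S : ℕ → ℕ → Fin n) (T : ℕ → ℕ → Fin d) :
    MvPolynomial (Fin n × Fin d) ℂ :=
  ∑ π : ∀ c : Fin (lam.headD 0), Equiv.Perm (Fin (colLen lam c)),
    bitab n d lam S (applyColPerm d lam T π)

/-- the (row-by-row, 0-indexed) cell number of the cell in row `r`, column `c` -/
def idx (lam : List ℕ) (r c : ℕ) : ℕ := (lam.take r).sum + c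

/-- the row of the `k`-th cell (cells numbered row by row, 0-indexed) -/
def cellRow : List ℕ → ℕ → ℕ
  | [], _ => 0
  | a :: l, k => if k < a then 0 else cellRow l (k - a) + 1

/-- the column of the `k`-th cell -/
def cellCol : List ℕ → ℕ → ℕ
  | [], k => k
  | a :: l, k => if k < a then k else cellCol l (k - a)


section Helpers

lemma cellRow_lt {lam : List ℕ} {k : ℕ} (hk : k < lam.sum) : cellRow lam k < lam.length := by
  induction lam generalizing k with
  | nil => simp at hk
  | cons a l ih =>
    simp only [cellRow]
    split
    · simp
    · next hka =>
      have h2 : k - a < l.sum := by simp only [List.sum_cons] at hk; omega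
      simpa using Nat.succ_lt_succ (ih h2)

lemma cellCol_lt {lam : List ℕ} {k : ℕ} (hk : k < lam.sum) :
    cellCol lam k < lam.getD (cellRow lam k) 0 := by
  induction lam generalizing k with
  | nil => simp at hk
  | cons a l ih =>
    simp only [cellCol, cellRow]
    split
    · next hka => simpa using hka
    · next hka =>
      have h2 : k - a < l.sum := by simp only [List.sum_cons] at hk; omega
      simpa using ih h2

lemma idx_cellRow_cellCol {lam : List ℕ} {k : ℕ} (hk : k < lam.sum) :
    idx lam (cellRow lam k) (cellCol lam k) = k := by
  induction lam generalizing k with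
  | nil => simp at hk
  | cons a l ih =>
    simp only [cellCol, cellRow]
    split
    · next hka => simp [idx]
    · next hka =>
      have h2 : k - a < l.sum := by simp only [List.sum_cons] at hk; omega
      have := ih h2
      simp only [idx, List.take_succ_cons, List.sum_cons] at *
      omega

lemma idx_lt_sum {lam : List ℕ} {r c : ℕ} (hc : c < lam.getD r 0) :
    idx lam r c < lam.sum := by
  induction lam generalizing r with
  | nil => simp at hc
  | cons a l ih =>
    cases r with
    | zero => simp only [List.getD_cons_zero] at hc; simp [idx, List.sum_cons]; omega
    | succ r =>
      simp only [List.getD_cons_succ] at hc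
      have := ih hc
      simp only [idx, List.take_succ_cons, List.sum_cons] at *
      omega

lemma cellRow_idx {lam : List ℕ} {r c : ℕ} (hc : c < lam.getD r 0) :
    cellRow lam (idx lam r c) = r := by
  induction lam generalizing r with
  | nil => simp at hc
  | cons a l ih =>
    cases r with
    | zero =>
      simp only [List.getD_cons_zero] at hc
      simp [cellRow, idx, hc]
    | succ r =>
      simp only [List.getD_cons_succ] at hc
      have h1 : idx (a :: l) (r + 1) c = a + idx l r c := by
        simp [idx, List.take_succ_cons, List.sum_cons]; omega
      simp only [cellRow, h1]
      rw [if_neg (by omega)]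
      rw [Nat.add_sub_cancel_left, ih hc]

lemma cellCol_idx {lam : List ℕ} {r c : ℕ} (hc : c < lam.getD r 0) :
    cellCol lam (idx lam r c) = c := by
  induction lam generalizing r with
  | nil => simp at hc
  | cons a l ih =>
    cases r with
    | zero =>
      simp only [List.getD_cons_zero] at hc
      simp [cellCol, idx, hc]
    | succ r =>
      simp only [List.getD_cons_succ] at hc
      have h1 : idx (a :: l) (r + 1) c = a + idx l r c := by
        simp [idx, List.take_succ_cons, List.sum_cons]; omega
      simp only [cellCol, h1]
      rw [if_neg (by omega)]
      rw [Nat.add_sub_cancel_left, ih hc]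

lemma idx_inj {lam : List ℕ} {r c r' c' : ℕ} (hc : c < lam.getD r 0)
    (hc' : c' < lam.getD r' 0) (hidx : idx lam r c = idx lam r' c') : r = r' ∧ c = c' := by
  have h1 := cellRow_idx hc
  have h2 := cellRow_idx hc'
  have h3 := cellCol_idx hc
  have h4 := cellCol_idx hc'
  rw [hidx] at h1 h3
  exact ⟨h1.symm.trans h2, h3.symm.trans h4⟩

lemma lt_colLen_iff {lam : List ℕ} (hs : lam.Pairwise (· ≥ ·)) (r c : ℕ) :
    r < colLen lam c ↔ c < lam.getD r 0 := by
  induction lam generalizing r with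
  | nil => simp [colLen]
  | cons a l ih =>
    rw [List.pairwise_cons] at hs
    have hcount : colLen (a :: l) c = colLen l c + if c < a then 1 else 0 := by
      simp [colLen, List.countP_cons]
    have hzero : ¬ c < a → colLen l c = 0 := by
      intro hca
      simp only [colLen, List.countP_eq_zero]
      intro b hb
      simp only [decide_eq_true_eq]
      have := hs.1 b hb
      omega
    cases r with
    | zero =>
      simp only [List.getD_cons_zero, hcount]
      constructor
      · intro hlt
        by_contra hca
        have := hzero hca
        rw [if_neg hca] at hlt
        omega
      · intro hca; rw [if_pos hca]; omega
    | succ r =>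
      simp only [List.getD_cons_succ, hcount]
      by_cases hca : c < a
      · rw [if_pos hca]
        rw [← ih hs.2]
        omega
      · rw [if_neg hca]
        have h0 := hzero hca
        constructor
        · intro hlt; omega
        · intro hlt
          exfalso
          have hle : l.getD r 0 ≤ a := by
            by_cases hr : r < l.length
            · exact hs.1 _ (by rw [List.getD_eq_getElem _ _ hr]; exact List.getElem_mem hr)
            · rw [List.getD_eq_default _ _ (by omega)]; omega
          omega

lemma getD_le_headD {lam : List ℕ} (hs : lam.Pairwise (· ≥ ·)) (r : ℕ) :
    lam.getD r 0 ≤ lam.headD 0 := by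
  cases lam with
  | nil => simp
  | cons a l =>
    rw [List.pairwise_cons] at hs
    cases r with
    | zero => simp
    | succ r =>
      simp only [List.getD_cons_succ, List.headD_cons]
      by_cases hr : r < l.length
      · exact hs.1 _ (by rw [List.getD_eq_getElem _ _ hr]; exact List.getElem_mem hr)
      · rw [List.getD_eq_default _ _ (by omega)]; omega


lemma sigma_fin_ext {ι : Type*} {f : ι → ℕ} {p q : Σ i : ι, Fin (f i)}
    (h1 : p.1 = q.1) (h2 : (p.2 : ℕ) = (q.2 : ℕ)) : p = q := by
  obtain ⟨i, x⟩ := p; obtain ⟨j, y⟩ := q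
  cases h1
  simp_all [Fin.ext_iff]

def rowEquiv (lam : List ℕ) : Fin lam.sum ≃ Σ r : Fin lam.length, Fin (lam.getD r 0) where
  toFun k := ⟨⟨cellRow lam k, cellRow_lt k.2⟩, ⟨cellCol lam k, cellCol_lt k.2⟩⟩
  invFun p := ⟨idx lam p.1 p.2, idx_lt_sum p.2.2⟩
  left_inv k := Fin.ext (idx_cellRow_cellCol k.2)
  right_inv p := by
    obtain ⟨⟨r, hr⟩, ⟨c, hc⟩⟩ := p
    exact sigma_fin_ext (Fin.ext (cellRow_idx hc)) (cellCol_idx hc)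

def colEquiv (lam : List ℕ) (hs : lam.Pairwise (· ≥ ·)) :
    Fin lam.sum ≃ Σ c : Fin (lam.headD 0), Fin (colLen lam c) where
  toFun k := ⟨⟨cellCol lam k, lt_of_lt_of_le (cellCol_lt k.2) (getD_le_headD hs _)⟩,
              ⟨cellRow lam k, (lt_colLen_iff hs _ _).mpr (cellCol_lt k.2)⟩⟩
  invFun p := ⟨idx lam p.2 p.1, idx_lt_sum ((lt_colLen_iff hs _ _).mp p.2.2)⟩
  left_inv k := Fin.ext (idx_cellRow_cellCol k.2)
  right_inv p := by
    obtain ⟨⟨c, hcl⟩, ⟨r, hr⟩⟩ := p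
    have hc : c < lam.getD r 0 := (lt_colLen_iff hs _ _).mp hr
    exact sigma_fin_ext (Fin.ext (cellCol_idx hc)) (cellRow_idx hc)

lemma choose_two_add (a b : ℕ) : (a + b).choose 2 = a.choose 2 + a * b + b.choose 2 := by
  induction a with
  | zero => simp
  | succ a ih =>
    have h1 : a + 1 + b = (a + b) + 1 := by ring
    rw [h1, Nat.choose_succ_succ, Nat.choose_one_right,
      show a + 1 = a + 1 from rfl, Nat.choose_succ_succ a 1, Nat.choose_one_right, ih]
    ring

lemma e2_add_sum_choose (lam : List ℕ) :
    e2 lam + (∑ r ∈ Finset.range lam.length, (lam.getD r 0).choose 2) = lam.sum.choose 2 := by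
  induction lam with
  | nil => simp [e2]
  | cons a l ih =>
    rw [List.sum_cons, choose_two_add]
    simp only [e2, List.length_cons, Finset.sum_range_succ', List.getD_cons_succ,
      List.getD_cons_zero]
    omega

lemma sign_sigmaCongrRight_single {ι : Type*} [DecidableEq ι] {β : ι → Type*}
    [∀ j, DecidableEq (β j)] [∀ j, Fintype (β j)] [Fintype ι] (i : ι) (g : Equiv.Perm (β i)) :
    Equiv.Perm.sign (Equiv.Perm.sigmaCongrRight (Pi.mulSingle i g))
      = Equiv.Perm.sign g := by
  classical
  let e : β i ≃ {x : Σ j, β j // x.fst = i} :=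
    { toFun := fun b => ⟨⟨i, b⟩, rfl⟩
      invFun := fun x => x.2 ▸ x.1.snd
      left_inv := fun b => rfl
      right_inv := fun x => by
        obtain ⟨⟨a, b⟩, hx⟩ := x
        subst hx
        rfl }
  have key : Equiv.Perm.sigmaCongrRight (Pi.mulSingle i g) = g.extendDomain e := by
    refine Equiv.ext fun x => ?_
    obtain ⟨a, b⟩ := x
    by_cases ha : a = i
    · subst ha
      rw [Equiv.Perm.extendDomain_apply_subtype g e (show (⟨a, b⟩ : Σ j, β j).fst = a from rfl)]
      simp [e, Pi.mulSingle_eq_same]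
    · rw [Equiv.Perm.extendDomain_apply_not_subtype g e (by exact ha)]
      simp [Pi.mulSingle_eq_of_ne ha]
  rw [key, Equiv.Perm.sign_extendDomain]

lemma sign_sigmaCongrRight {ι : Type*} [DecidableEq ι] [Fintype ι] {β : ι → Type*}
    [∀ i, DecidableEq (β i)] [∀ i, Fintype (β i)] (ρ : ∀ i, Equiv.Perm (β i)) :
    Equiv.Perm.sign (Equiv.Perm.sigmaCongrRight ρ) = ∏ i, Equiv.Perm.sign (ρ i) := by
  classical
  have key := MonoidHom.pi_ext
    (f := Equiv.Perm.sign.comp (Equiv.Perm.sigmaCongrRightHom β))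
    (g := ∏ i, Equiv.Perm.sign.comp (Pi.evalMonoidHom (fun i => Equiv.Perm (β i)) i))
    (fun i x => by
      rw [MonoidHom.finset_prod_apply, Finset.prod_eq_single i]
      · simp only [MonoidHom.comp_apply, Pi.evalMonoidHom_apply, Pi.mulSingle_eq_same]
        exact sign_sigmaCongrRight_single i x
      · intro j _ hj
        simp [Pi.mulSingle_eq_of_ne hj]
      · intro hi; exact absurd (Finset.mem_univ i) hi)
  have := DFunLike.congr_fun key ρ
  rw [MonoidHom.finset_prod_apply] at this
  exact this

lemma sigmaCongrRight_injective {ι : Type*} {β : ι → Type*} {ρ ρ' : ∀ i, Equiv.Perm (β i)}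
    (hyp : Equiv.Perm.sigmaCongrRight ρ = Equiv.Perm.sigmaCongrRight ρ') : ρ = ρ' := by
  funext i
  ext b
  have h1 : Equiv.Perm.sigmaCongrRight ρ ⟨i, b⟩ = Equiv.Perm.sigmaCongrRight ρ' ⟨i, b⟩ := by
    rw [hyp]
  have h2 : (⟨i, ρ i b⟩ : Σ j, β j) = ⟨i, ρ' i b⟩ := h1
  simpa using h2


lemma biprod_map_range (n d m : ℕ) (f : ℕ → Fin n) (g : ℕ → Fin d) :
    biprod n d ((List.range m).map f) ((List.range m).map g) =
      (-1 : MvPolynomial (Fin n × Fin d) ℂ) ^ m.choose 2 *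
        ∑ ρ : Equiv.Perm (Fin m),
          ((Equiv.Perm.sign ρ : ℤ) : MvPolynomial (Fin n × Fin d) ℂ) *
            ∏ b : Fin m, X (f (ρ b), g b) := by
  set ω := (List.range m).map f with hω
  set ϖ := (List.range m).map g with hϖ
  have hl : ω.length = ϖ.length := by simp [hω, hϖ]
  have hlen : ω.length = m := by simp [hω]
  rw [biprod, dif_pos hl]
  have hdet : (Matrix.of fun r s : Fin ω.length =>
      (X (ω.get r, ϖ.get (Fin.cast hl s)) : MvPolynomial (Fin n × Fin d) ℂ)).det
      = (Matrix.of fun r s : Fin m =>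
          (X (f r, g s) : MvPolynomial (Fin n × Fin d) ℂ)).det := by
    rw [← Matrix.det_reindex_self (finCongr hlen) (Matrix.of fun r s : Fin ω.length =>
      (X (ω.get r, ϖ.get (Fin.cast hl s)) : MvPolynomial (Fin n × Fin d) ℂ))]
    congr 1
    ext i j
    simp [hω, hϖ, List.get_eq_getElem, List.getElem_map, List.getElem_range]
  rw [hdet, Matrix.det_apply', hlen]
  congr 1

lemma bitab_expand (n d : ℕ) (lam : List ℕ) (U : ℕ → ℕ → Fin n) (V : ℕ → ℕ → Fin d) :
    bitab n d lam U V =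
      (-1 : MvPolynomial (Fin n × Fin d) ℂ) ^ lam.sum.choose 2 *
        ∑ ρ : ∀ r : Fin lam.length, Equiv.Perm (Fin (lam.getD (r : ℕ) 0)),
          (∏ r : Fin lam.length,
            ((Equiv.Perm.sign (ρ r) : ℤ) : MvPolynomial (Fin n × Fin d) ℂ)) *
            ∏ r : Fin lam.length, ∏ b : Fin (lam.getD (r : ℕ) 0),
              X (U r (ρ r b), V r b) := by
  rw [bitab]
  have hrow : ∀ r, biprod n d (rowWord n lam U r) (rowWord d lam V r) =
      (-1 : MvPolynomial (Fin n × Fin d) ℂ) ^ (lam.getD r 0).choose 2 *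
        ∑ ρ : Equiv.Perm (Fin (lam.getD r 0)),
          ((Equiv.Perm.sign ρ : ℤ) : MvPolynomial (Fin n × Fin d) ℂ) *
            ∏ b : Fin (lam.getD r 0), X (U r (ρ b), V r b) := fun r =>
    biprod_map_range n d (lam.getD r 0) (U r) (V r)
  simp only [hrow]
  rw [Finset.prod_mul_distrib, Finset.prod_pow_eq_pow_sum, ← mul_assoc, ← pow_add]
  rw [e2_add_sum_choose lam]
  congr 1
  rw [Finset.prod_range fun r => ∑ ρ : Equiv.Perm (Fin (lam.getD r 0)),
    ((Equiv.Perm.sign ρ : ℤ) : MvPolynomial (Fin n × Fin d) ℂ) *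
      ∏ b : Fin (lam.getD r 0), X (U r (ρ b), V r b)]
  rw [Finset.prod_univ_sum]
  rw [Fintype.piFinset_univ]
  refine Finset.sum_congr rfl fun ρ _ => ?_
  rw [Finset.prod_mul_distrib]


lemma sigma_snd_eq {ι : Type*} {β : ι → Type*} (p : Σ i, β i) {i : ι} (hi : p.fst = i) :
    p = ⟨i, hi ▸ p.snd⟩ := by subst hi; rfl

lemma exists_sigmaCongrRight {ι : Type*} {β : ι → Type*} (q : Equiv.Perm (Σ i, β i))
    (hq : ∀ p, (q p).fst = p.fst) :
    ∃ ρ : ∀ i, Equiv.Perm (β i), Equiv.Perm.sigmaCongrRight ρ = q := by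
  have hq' : ∀ p, (q.symm p).fst = p.fst := by
    intro p
    have h := hq (q.symm p)
    rw [Equiv.apply_symm_apply] at h
    exact h.symm
  have hqi : ∀ i (b : β i), (q ⟨i, b⟩).fst = i := fun i b => hq ⟨i, b⟩
  have hqi' : ∀ i (b : β i), (q.symm ⟨i, b⟩).fst = i := fun i b => hq' ⟨i, b⟩
  let f : ∀ i, β i → β i := fun i b => (hqi i b) ▸ (q ⟨i, b⟩).snd
  let g : ∀ i, β i → β i := fun i b => (hqi' i b) ▸ (q.symm ⟨i, b⟩).snd
  have hf : ∀ i b, q ⟨i, b⟩ = ⟨i, f i b⟩ := fun i b => sigma_snd_eq _ (hqi i b)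
  have hg : ∀ i b, q.symm ⟨i, b⟩ = ⟨i, g i b⟩ := fun i b => sigma_snd_eq _ (hqi' i b)
  have hgf : ∀ i b, g i (f i b) = b := by
    intro i b
    have h2 := hg i (f i b)
    rw [← hf, Equiv.symm_apply_apply] at h2
    simpa using h2.symm
  have hfg : ∀ i b, f i (g i b) = b := by
    intro i b
    have h2 := hf i (g i b)
    rw [← hg, Equiv.apply_symm_apply] at h2
    simpa using h2.symm
  refine ⟨fun i => ⟨f i, g i, hgf i, hfg i⟩, ?_⟩
  refine Equiv.ext fun p => ?_
  obtain ⟨i, b⟩ := p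
  exact (hf i b).symm

def sigmaMap (lam : List ℕ) (S : Equiv.Perm (Fin lam.sum))
    (ρ : ∀ r : Fin lam.length, Equiv.Perm (Fin (lam.getD (r : ℕ) 0))) :
    Equiv.Perm (Fin lam.sum) :=
  (S : Fin lam.sum ≃ Fin lam.sum).permCongr
    ((rowEquiv lam).symm.permCongr (Equiv.sigmaCongrRight ρ))

def tauMap (lam : List ℕ) (hs : lam.Pairwise (· ≥ ·)) (T : Equiv.Perm (Fin lam.sum))
    (π : ∀ c : Fin (lam.headD 0), Equiv.Perm (Fin (colLen lam (c : ℕ)))) :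
    Equiv.Perm (Fin lam.sum) :=
  (T : Fin lam.sum ≃ Fin lam.sum).permCongr
    ((colEquiv lam hs).symm.permCongr (Equiv.sigmaCongrRight (fun c => (π c)⁻¹)))

lemma sigmaMap_apply (lam : List ℕ) (S : Equiv.Perm (Fin lam.sum))
    (ρ : ∀ r : Fin lam.length, Equiv.Perm (Fin (lam.getD (r : ℕ) 0))) (x : Fin lam.sum) :
    sigmaMap lam S ρ x
      = S ((rowEquiv lam).symm (Equiv.sigmaCongrRight ρ ((rowEquiv lam) (S.symm x)))) := by
  simp [sigmaMap, Equiv.permCongr_apply, Equiv.Perm.inv_def, Equiv.symm_symm]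

lemma tauMap_apply (lam : List ℕ) (hs : lam.Pairwise (· ≥ ·)) (T : Equiv.Perm (Fin lam.sum))
    (π : ∀ c : Fin (lam.headD 0), Equiv.Perm (Fin (colLen lam (c : ℕ)))) (x : Fin lam.sum) :
    tauMap lam hs T π x
      = T ((colEquiv lam hs).symm (Equiv.sigmaCongrRight (fun c => (π c)⁻¹)
          ((colEquiv lam hs) (T.symm x)))) := by
  simp [tauMap, Equiv.permCongr_apply, Equiv.Perm.inv_def, Equiv.symm_symm]

lemma sign_sigmaMap (lam : List ℕ) (S : Equiv.Perm (Fin lam.sum))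
    (ρ : ∀ r : Fin lam.length, Equiv.Perm (Fin (lam.getD (r : ℕ) 0))) :
    Equiv.Perm.sign (sigmaMap lam S ρ) = ∏ r, Equiv.Perm.sign (ρ r) := by
  rw [sigmaMap, Equiv.Perm.sign_permCongr, Equiv.Perm.sign_permCongr, sign_sigmaCongrRight]


lemma monomial_match (n d : ℕ) (lam : List ℕ) (hsort : lam.Pairwise (· ≥ ·))
    (S T : Equiv.Perm (Fin lam.sum)) (I : Fin lam.sum → Fin n) (J : Fin lam.sum → Fin d)
    (U : ℕ → ℕ → Fin n) (V : ℕ → ℕ → Fin d)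
    (hU : ∀ r c (_ : c < lam.getD r 0) (hi : idx lam r c < lam.sum),
      U r c = I (S ⟨idx lam r c, hi⟩))
    (hV : ∀ r c (_ : c < lam.getD r 0) (hi : idx lam r c < lam.sum),
      V r c = J (T ⟨idx lam r c, hi⟩))
    (π : ∀ c : Fin (lam.headD 0), Equiv.Perm (Fin (colLen lam (c : ℕ))))
    (ρ : ∀ r : Fin lam.length, Equiv.Perm (Fin (lam.getD (r : ℕ) 0))) :
    ∏ r : Fin lam.length, ∏ b : Fin (lam.getD (r : ℕ) 0),
        (X (U (r : ℕ) ((ρ r b : ℕ)), applyColPerm d lam V π (r : ℕ) (b : ℕ))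
          : MvPolynomial (Fin n × Fin d) ℂ)
      = ∏ k : Fin lam.sum,
          X (I (sigmaMap lam S ρ (S (T.symm (tauMap lam hsort T π k)))), J k) := by
  classical
  set EC := colEquiv lam hsort with hEC
  set ER := rowEquiv lam with hER
  rw [← Equiv.prod_comp T (fun k =>
    (X (I (sigmaMap lam S ρ (S (T.symm (tauMap lam hsort T π k)))), J k)
      : MvPolynomial (Fin n × Fin d) ℂ))]
  rw [Finset.prod_sigma' Finset.univ (fun _ => Finset.univ)
    (fun (r : Fin lam.length) (b : Fin (lam.getD (r : ℕ) 0)) =>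
      (X (U (r : ℕ) ((ρ r b : ℕ)), applyColPerm d lam V π (r : ℕ) (b : ℕ))
        : MvPolynomial (Fin n × Fin d) ℂ))]
  rw [Finset.univ_sigma_univ]
  set e₀ : Fin lam.sum ≃ Σ r : Fin lam.length, Fin (lam.getD (r : ℕ) 0) :=
    (EC.trans (Equiv.sigmaCongrRight (fun c => (π c)⁻¹))).trans (EC.symm.trans ER) with he₀
  rw [← Equiv.prod_comp e₀ (fun p : Σ r : Fin lam.length, Fin (lam.getD (r : ℕ) 0) =>
    (X (U (p.1 : ℕ) ((ρ p.1 p.2 : ℕ)), applyColPerm d lam V π (p.1 : ℕ) (p.2 : ℕ))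
      : MvPolynomial (Fin n × Fin d) ℂ))]
  refine Finset.prod_congr rfl fun m _ => ?_
  -- coordinates of m
  have hm : (m : ℕ) < lam.sum := m.isLt
  set r' := cellRow lam m with hr'
  set c := cellCol lam m with hc
  have hcm : c < lam.getD r' 0 := cellCol_lt hm
  have hc0 : c < lam.headD 0 := lt_of_lt_of_le hcm (getD_le_headD hsort r')
  have hcol : r' < colLen lam c := (lt_colLen_iff hsort r' c).mpr hcm
  set w : Fin (colLen lam c) := (π ⟨c, hc0⟩)⁻¹ ⟨r', hcol⟩ with hw
  have hcw : c < lam.getD (w : ℕ) 0 := (lt_colLen_iff hsort _ _).mp w.isLt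
  set k₁ : Fin lam.sum := ⟨idx lam (w : ℕ) c, idx_lt_sum hcw⟩ with hk₁
  have hkrow : cellRow lam (k₁ : ℕ) = (w : ℕ) := cellRow_idx hcw
  have hkcol : cellCol lam (k₁ : ℕ) = c := cellCol_idx hcw
  -- the tau side
  have hk : T.symm (tauMap lam hsort T π (T m)) = k₁ := by
    rw [tauMap_apply]
    rw [Equiv.symm_apply_apply, Equiv.symm_apply_apply]
    rfl
  -- e₀ m
  have he₀m : e₀ m = ⟨⟨cellRow lam (k₁ : ℕ), cellRow_lt k₁.isLt⟩,
      ⟨cellCol lam (k₁ : ℕ), cellCol_lt k₁.isLt⟩⟩ := rfl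
  -- sigma side
  have harg : sigmaMap lam S ρ (S (T.symm (tauMap lam hsort T π (T m))))
      = S ⟨idx lam (cellRow lam (k₁ : ℕ))
            ((ρ ⟨cellRow lam (k₁ : ℕ), cellRow_lt k₁.isLt⟩
              ⟨cellCol lam (k₁ : ℕ), cellCol_lt k₁.isLt⟩ : ℕ)),
          idx_lt_sum (Fin.isLt _)⟩ := by
    rw [hk, sigmaMap_apply, Equiv.symm_apply_apply]
    rfl
  rw [he₀m, harg]
  -- now compare the two X's
  have hUeq : U (cellRow lam (k₁ : ℕ))
      ((ρ ⟨cellRow lam (k₁ : ℕ), cellRow_lt k₁.isLt⟩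
        ⟨cellCol lam (k₁ : ℕ), cellCol_lt k₁.isLt⟩ : ℕ))
      = I (S ⟨idx lam (cellRow lam (k₁ : ℕ))
            ((ρ ⟨cellRow lam (k₁ : ℕ), cellRow_lt k₁.isLt⟩
              ⟨cellCol lam (k₁ : ℕ), cellCol_lt k₁.isLt⟩ : ℕ)),
          idx_lt_sum (Fin.isLt _)⟩) := by
    exact hU _ _ (Fin.isLt _) _
  have hVeq : applyColPerm d lam V π (cellRow lam (k₁ : ℕ)) (cellCol lam (k₁ : ℕ))
      = J (T m) := by
    rw [hkrow, hkcol, applyColPerm, dif_pos ⟨hc0, w.isLt⟩]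
    have hπw : (π ⟨c, hc0⟩) ⟨(w : ℕ), w.isLt⟩ = ⟨r', hcol⟩ := by
      rw [show (⟨(w : ℕ), w.isLt⟩ : Fin (colLen lam c)) = w from rfl, hw]
      exact Equiv.apply_symm_apply _ _
    rw [hπw]
    rw [hV r' c hcm (idx_lt_sum hcm)]
    congr 1
    exact congrArg T (Fin.ext (idx_cellRow_cellCol hm))
  rw [hUeq, hVeq]

end Helpers

/-- right symmetrized bitableaux and Young symmetrizers, the
general case: for multilinear tableaux `S, T` of the same shape `λ ⊢ h`
(encoded as permutations: the entry of the cell numbered `k` is `S k`),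
arbitrary maps `I : {1,…,h} → {1,…,n}`, `J : {1,…,h} → {1,…,d}`, and
`U = I∘S`, `V = J∘T` (encoded cellwise as functions `ℕ → ℕ → Fin _`), one has
`(U|⎕V) = (−1)^(h choose 2) · Σ_{σ∈R(S),τ∈C(T)} sgn(σ) · Π_k x_{I((σθ_{ST}τ)(k)), J(k)}`
in `ℂ[M_{n,d}]`, where `θ_{ST} = S ∘ T⁻¹`. -/
theorem symmBitab_eq_youngSymmetrizer_general (n d : ℕ) (hn : 0 < n) (hd : 0 < d)
    (h : ℕ) (lam : List ℕ) (hlam : IsShape h lam)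
    (S T : Equiv.Perm (Fin h))
    (I : Fin h → Fin n) (J : Fin h → Fin d)
    (U : ℕ → ℕ → Fin n) (V : ℕ → ℕ → Fin d)
    (hU : ∀ r c (_ : c < lam.getD r 0) (hi : idx lam r c < h),
      U r c = I (S ⟨idx lam r c, hi⟩))
    (hV : ∀ r c (_ : c < lam.getD r 0) (hi : idx lam r c < h),
      V r c = J (T ⟨idx lam r c, hi⟩)) :
    symmBitab n d lam U V =
      (-1 : MvPolynomial (Fin n × Fin d) ℂ) ^ h.choose 2 *
        ∑ σ ∈ Finset.univ.filter
            (fun σ : Equiv.Perm (Fin h) =>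
              ∀ a, cellRow lam (S.symm (σ a)) = cellRow lam (S.symm a)),
          ∑ τ ∈ Finset.univ.filter
              (fun τ : Equiv.Perm (Fin h) =>
                ∀ a, cellCol lam (T.symm (τ a)) = cellCol lam (T.symm a)),
            ((Equiv.Perm.sign σ : ℤ) : MvPolynomial (Fin n × Fin d) ℂ) *
              ∏ k : Fin h, X (I (σ (S (T.symm (τ k)))), J k) := by
  classical
  obtain ⟨hsort, hpos, hsum⟩ := hlam
  subst hsum
  have e1 : symmBitab n d lam U V
      = ∑ π : ∀ c : Fin (lam.headD 0), Equiv.Perm (Fin (colLen lam (c : ℕ))),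
          (-1 : MvPolynomial (Fin n × Fin d) ℂ) ^ lam.sum.choose 2 *
            ∑ ρ : ∀ r : Fin lam.length, Equiv.Perm (Fin (lam.getD (r : ℕ) 0)),
              (∏ r : Fin lam.length,
                ((Equiv.Perm.sign (ρ r) : ℤ) : MvPolynomial (Fin n × Fin d) ℂ)) *
                ∏ r : Fin lam.length, ∏ b : Fin (lam.getD (r : ℕ) 0),
                  X (U (r : ℕ) ((ρ r b : ℕ)), applyColPerm d lam V π (r : ℕ) (b : ℕ)) := by
    rw [symmBitab]
    exact Finset.sum_congr rfl fun π _ => bitab_expand n d lam U (applyColPerm d lam V π)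
  rw [e1, ← Finset.mul_sum]
  congr 1
  rw [Finset.sum_comm]
  refine Finset.sum_bij (fun ρ _ => sigmaMap lam S ρ) ?_ ?_ ?_ ?_
  · intro ρ _
    simp only [Finset.mem_filter, Finset.mem_univ, true_and]
    intro a
    rw [sigmaMap_apply, Equiv.symm_apply_apply]
    exact cellRow_idx (Fin.isLt _)
  · intro ρ1 _ ρ2 _ hcongr
    have h1 := ((S : Fin lam.sum ≃ Fin lam.sum).permCongr).injective hcongr
    have h2 := ((rowEquiv lam).symm.permCongr).injective h1
    exact sigmaCongrRight_injective h2
  · intro σ hσ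
    simp only [Finset.mem_filter, Finset.mem_univ, true_and] at hσ
    set σ₀ : Equiv.Perm (Fin lam.sum) := (S : Fin lam.sum ≃ Fin lam.sum).symm.permCongr σ
      with hσ₀
    have hσ₀row : ∀ x : Fin lam.sum, cellRow lam (σ₀ x : ℕ) = cellRow lam (x : ℕ) := by
      intro x
      have h1 : σ₀ x = S.symm (σ (S x)) := by
        simp [hσ₀, Equiv.permCongr_apply, Equiv.Perm.inv_def, Equiv.symm_symm]
      rw [h1, hσ (S x), Equiv.symm_apply_apply]
    set q := (rowEquiv lam).permCongr σ₀ with hq'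
    have hq : ∀ p, (q p).fst = p.fst := by
      intro p
      obtain ⟨⟨r, hr⟩, ⟨cc, hcc⟩⟩ := p
      apply Fin.ext
      show cellRow lam ((σ₀ ((rowEquiv lam).symm ⟨⟨r, hr⟩, ⟨cc, hcc⟩⟩)) : ℕ) = r
      rw [hσ₀row]
      exact cellRow_idx hcc
    obtain ⟨ρ, hρ⟩ := exists_sigmaCongrRight q hq
    refine ⟨ρ, Finset.mem_univ _, ?_⟩
    show sigmaMap lam S ρ = σ
    have hdef : sigmaMap lam S ρ = (S : Fin lam.sum ≃ Fin lam.sum).permCongr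
        ((rowEquiv lam).symm.permCongr (Equiv.sigmaCongrRight ρ)) := rfl
    have hρ2 : Equiv.sigmaCongrRight ρ = q := hρ
    rw [hdef, hρ2, hq']
    refine Equiv.ext fun x => ?_
    simp [hσ₀, Equiv.permCongr_apply, Equiv.Perm.inv_def, Equiv.symm_symm]
  · intro ρ _
    refine Finset.sum_bij (fun π _ => tauMap lam hsort T π) ?_ ?_ ?_ ?_
    · intro π _
      simp only [Finset.mem_filter, Finset.mem_univ, true_and]
      intro a
      rw [tauMap_apply, Equiv.symm_apply_apply]
      exact cellCol_idx ((lt_colLen_iff hsort _ _).mp (Fin.isLt _))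
    · intro π1 _ π2 _ hcongr
      have h1 := ((T : Fin lam.sum ≃ Fin lam.sum).permCongr).injective hcongr
      have h2 := ((colEquiv lam hsort).symm.permCongr).injective h1
      have h3 := sigmaCongrRight_injective h2
      funext cc
      exact inv_injective (congrFun h3 cc)
    · intro τ hτ
      simp only [Finset.mem_filter, Finset.mem_univ, true_and] at hτ
      set τ₀ : Equiv.Perm (Fin lam.sum) := (T : Fin lam.sum ≃ Fin lam.sum).symm.permCongr τ
        with hτ₀
      have hτ₀col : ∀ x : Fin lam.sum, cellCol lam (τ₀ x : ℕ) = cellCol lam (x : ℕ) := by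
        intro x
        have h1 : τ₀ x = T.symm (τ (T x)) := by
          simp [hτ₀, Equiv.permCongr_apply, Equiv.Perm.inv_def, Equiv.symm_symm]
        rw [h1, hτ (T x), Equiv.symm_apply_apply]
      set q := (colEquiv lam hsort).permCongr τ₀ with hq'
      have hq : ∀ p, (q p).fst = p.fst := by
        intro p
        obtain ⟨⟨cc, hcc⟩, ⟨r, hr⟩⟩ := p
        apply Fin.ext
        show cellCol lam ((τ₀ ((colEquiv lam hsort).symm ⟨⟨cc, hcc⟩, ⟨r, hr⟩⟩)) : ℕ) = cc
        rw [hτ₀col]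
        exact cellCol_idx ((lt_colLen_iff hsort _ _).mp hr)
      obtain ⟨π', hπ'⟩ := exists_sigmaCongrRight q hq
      refine ⟨fun cc => (π' cc)⁻¹, Finset.mem_univ _, ?_⟩
      show tauMap lam hsort T (fun cc => (π' cc)⁻¹) = τ
      have hdef : tauMap lam hsort T (fun cc => (π' cc)⁻¹)
          = (T : Fin lam.sum ≃ Fin lam.sum).permCongr ((colEquiv lam hsort).symm.permCongr
              (Equiv.sigmaCongrRight (fun c => ((fun cc => (π' cc)⁻¹) c)⁻¹))) := rfl
      have hπ2 : Equiv.sigmaCongrRight π' = q := hπ'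
      rw [hdef]
      simp only [inv_inv]
      rw [hπ2, hq']
      refine Equiv.ext fun x => ?_
      simp [hτ₀, Equiv.permCongr_apply, Equiv.Perm.inv_def, Equiv.symm_symm]
    · intro π _
      rw [monomial_match n d lam hsort S T I J U V hU hV π ρ]
      congr 1
      rw [sign_sigmaMap]
      push_cast
      rfl

end
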